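/- Let G be an n-vertex simple graph of twin-width at most k. Then cz(G) ≤ (k+2)·n, where cz(G) denotes the CZ-distance between G and the edgeless graph on V(G). -/

import Mathlib

variable {V : Type*}

open Classical in
/-- Local complementation at `v`: complement the induced subgraph on `N_G(v)`. -/
noncomputable def localComp (G : SimpleGraph V) (v : V) : SimpleGraph V where
  Adj x y := x ≠ y ∧ (if G.Adj v x ∧ G.Adj v y then ¬ G.Adj x y else G.Adj x y)
  symm := by
    constructor
    intro x y ⟨hxy, h⟩
    refine ⟨hxy.symm, ?_⟩
    by_cases hc : G.Adj v x ∧ G.Adj v y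
    · rw [if_pos hc] at h
      rw [if_pos ⟨hc.2, hc.1⟩]
      exact fun h' => h h'.symm
    · rw [if_neg hc] at h
      rw [if_neg (fun h' => hc ⟨h'.2, h'.1⟩)]
      exact h.symm
  loopless := ⟨fun x hx => hx.1 rfl⟩

/-- Toggle (add or remove) the edge `uv`. -/
def toggle (G : SimpleGraph V) (u v : V) : SimpleGraph V where
  Adj x y := x ≠ y ∧ Xor' (G.Adj x y) ((x = u ∧ y = v) ∨ (x = v ∧ y = u))
  symm := by
    constructor
    intro x y ⟨hxy, h⟩
    refine ⟨hxy.symm, ?_⟩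
    rw [G.adj_comm y x]
    unfold Xor' Xor at *
    tauto
  loopless := ⟨fun x hx => hx.1 rfl⟩

/-- Local equivalence: related by a sequence of local complementations. -/
def LocallyEquiv (G H : SimpleGraph V) : Prop :=
  Relation.ReflTransGen (fun A B => ∃ v, B = localComp A v) G H

/-- `CZle G H k` : there is a sequence `G = G₀, G₀', G₁, G₁', …, G_k, G_k' = H`
with each `Gᵢ'` locally equivalent to `Gᵢ` and each `Gᵢ` (i ≥ 1) obtained from
`G_{i-1}'` by adding or removing a single edge. -/
inductive CZle : SimpleGraph V → SimpleGraph V → ℕ → Prop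
  | base {G H : SimpleGraph V} : LocallyEquiv G H → CZle G H 0
  | step {G G' F H : SimpleGraph V} {k : ℕ} (u v : V) :
      LocallyEquiv G G' → u ≠ v → F = toggle G' u v → CZle F H k → CZle G H (k + 1)

/-- The CZ-distance between two graphs on the same vertex set. -/
noncomputable def czDist (G H : SimpleGraph V) : ℕ := sInf {k | CZle G H k}

/-- The CZ-distance of a graph: CZ-distance to the edgeless graph. -/
noncomputable def cz (G : SimpleGraph V) : ℕ := czDist G ⊥

open Classical in
/-- Complementing on a vertex set `X`: replace the induced subgraph on `X` by its complement. -/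
noncomputable def complOn (G : SimpleGraph V) (X : Set V) : SimpleGraph V :=
  SimpleGraph.fromRel (fun x y => if x ∈ X ∧ y ∈ X then ¬ G.Adj x y else G.Adj x y)

open Classical in
/-- The adjacency matrix over GF(2). -/
noncomputable def adjMat (G : SimpleGraph V) : Matrix V V (ZMod 2) :=
  fun x y => if G.Adj x y then 1 else 0

/-- `H` is a rank-`p` perturbation of `G`. -/
def IsRankPerturbation [Fintype V] (p : ℕ) (G H : SimpleGraph V) : Prop :=
  ∃ M : Matrix V V (ZMod 2), M.IsSymm ∧ M.rank ≤ p ∧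
    ∀ x y : V, x ≠ y → adjMat H x y = adjMat G x y + M x y

/-- `G` is a circle graph: the overlap graph of a family of closed intervals in `ℝ`
with pairwise distinct endpoints. -/
def IsCircleGraph (G : SimpleGraph V) : Prop :=
  ∃ l r : V → ℝ, (∀ v, l v < r v) ∧
    Function.Injective (fun p : V × Bool => if p.2 then r p.1 else l p.1) ∧
    ∀ x y, G.Adj x y ↔
      ((l x < l y ∧ l y < r x ∧ r x < r y) ∨ (l y < l x ∧ l x < r y ∧ r y < r x))

/-- Two vertex sets are homogeneous: complete or anticomplete to each other. -/
def Homog (G : SimpleGraph V) (X Y : Finset V) : Prop :=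
  (∀ x ∈ X, ∀ y ∈ Y, G.Adj x y) ∨ (∀ x ∈ X, ∀ y ∈ Y, ¬ G.Adj x y)

/-- Every part of the partition `P` has red degree (number of other parts it is
inhomogeneous to) at most `k`. -/
def RedDegLE [Fintype V] [DecidableEq V] (G : SimpleGraph V) (P : Finpartition (Finset.univ : Finset V))
    (k : ℕ) : Prop :=
  ∀ X ∈ P.parts, {Y : Finset V | Y ∈ P.parts ∧ Y ≠ X ∧ ¬ Homog G X Y}.ncard ≤ k

/-- One contraction: merge two parts of the partition. -/
def MergeStep [Fintype V] [DecidableEq V]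
    (P Q : Finpartition (Finset.univ : Finset V)) : Prop :=
  ∃ A B, A ∈ P.parts ∧ B ∈ P.parts ∧ A ≠ B ∧
    Q.parts = insert (A ∪ B) ((P.parts.erase A).erase B)

/-- `G` has twin-width at most `k`: there is a contraction (partition) sequence from
the discrete partition to the trivial one in which every partition has red degree at
most `k`. -/
def TwinWidthLE [Fintype V] [DecidableEq V] (G : SimpleGraph V) (k : ℕ) : Prop :=
  ∃ (m : ℕ) (seq : Fin (m + 1) → Finpartition (Finset.univ : Finset V)),
    (∀ X ∈ (seq 0).parts, X.card = 1) ∧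
    (seq (Fin.last m)).parts.card ≤ 1 ∧
    (∀ i : Fin m, MergeStep (seq i.castSucc) (seq i.succ)) ∧
    (∀ i, RedDegLE G (seq i) k)

/-- `H` is obtained from `G` (in which `u` is isolated) by adding all edges between `u`
and `N_G(v)`, possibly adding the edge `uv`, and then adding at most `k` additional
edges incident to `u`. -/
def ExtendStep (k : ℕ) (G H : SimpleGraph V) (u v : V) : Prop :=
  u ≠ v ∧ G.neighborSet u = ∅ ∧
  (∀ x y, x ≠ u → y ≠ u → (H.Adj x y ↔ G.Adj x y)) ∧
  G.neighborSet v ⊆ H.neighborSet u ∧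
  ∃ T : Finset V, T.card ≤ k ∧ H.neighborSet u ⊆ G.neighborSet v ∪ {v} ∪ ↑T

section Proof12Aux

open Classical

lemma localComp_adj (G : SimpleGraph V) (v x y : V) :
    (localComp G v).Adj x y ↔ x ≠ y ∧ Xor' (G.Adj x y) (G.Adj v x ∧ G.Adj v y) := by
  show (x ≠ y ∧ if G.Adj v x ∧ G.Adj v y then ¬ G.Adj x y else G.Adj x y) ↔ _
  by_cases h : G.Adj v x ∧ G.Adj v y <;> by_cases h2 : G.Adj x y <;> simp [h, h2, Xor', Xor]

lemma toggle_adj (G : SimpleGraph V) (u v x y : V) :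
    (toggle G u v).Adj x y ↔ x ≠ y ∧ Xor' (G.Adj x y) ((x = u ∧ y = v) ∨ (x = v ∧ y = u)) :=
  Iff.rfl

lemma localComp_localComp (G : SimpleGraph V) (v : V) :
    localComp (localComp G v) v = G := by
  ext x y
  by_cases hxy : x = y
  · subst hxy; simp [SimpleGraph.irrefl, localComp_adj]
  · simp only [localComp_adj, Xor', Xor]
    by_cases hxv : x = v <;> by_cases hyv : y = v <;>
      simp_all [SimpleGraph.irrefl, localComp_adj, Xor', Xor] <;> tauto

lemma toggle_toggle (G : SimpleGraph V) (u v : V) :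
    toggle (toggle G u v) u v = G := by
  ext x y
  by_cases hxy : x = y
  · subst hxy; simp [SimpleGraph.irrefl, toggle_adj]
  · simp only [toggle_adj, Xor', Xor]
    tauto

end Proof12Aux
section Proof12Aux2

open Classical Finset

variable [Fintype V] [DecidableEq V]

def setNbr (G : SimpleGraph V) (u : V) (D : Finset V) : SimpleGraph V where
  Adj x y := (x ≠ u ∧ y ≠ u ∧ G.Adj x y) ∨ (x = u ∧ y ∈ D ∧ y ≠ u) ∨ (y = u ∧ x ∈ D ∧ x ≠ u)
  symm := by
    constructor
    intro x y h
    rcases h with ⟨h1, h2, h3⟩ | h | h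
    · exact Or.inl ⟨h2, h1, h3.symm⟩
    · exact Or.inr (Or.inr h)
    · exact Or.inr (Or.inl h)
  loopless := by
    constructor
    intro x h
    rcases h with ⟨_, _, h3⟩ | ⟨h1, _, h3⟩ | ⟨h1, _, h3⟩
    · exact G.irrefl h3
    · exact h3 h1
    · exact h3 h1

lemma setNbr_adj (G : SimpleGraph V) (u : V) (D : Finset V) (x y : V) :
    (setNbr G u D).Adj x y ↔
      (x ≠ u ∧ y ≠ u ∧ G.Adj x y) ∨ (x = u ∧ y ∈ D ∧ y ≠ u) ∨ (y = u ∧ x ∈ D ∧ x ≠ u) :=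
  Iff.rfl

open Classical in
noncomputable def nbrF (G : SimpleGraph V) (v : V) : Finset V :=
  Finset.univ.filter (fun y => G.Adj v y)

lemma mem_nbrF (G : SimpleGraph V) (v y : V) : y ∈ nbrF G v ↔ G.Adj v y := by
  simp [nbrF]

/-- Toggling an edge at `u` changes the `setNbr` set by a symmetric difference. -/
lemma toggle_setNbr (G : SimpleGraph V) (u w : V) (D : Finset V) (hw : w ≠ u) :
    toggle (setNbr G u D) u w = setNbr G u (symmDiff D {w}) := by
  ext x y
  by_cases hxy : x = y
  · subst hxy; simp [SimpleGraph.irrefl, toggle_adj, setNbr_adj, Xor', Xor]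
  · simp only [toggle_adj, setNbr_adj, Xor', Xor, Finset.mem_symmDiff, Finset.mem_singleton]
    by_cases hx : x = u <;> by_cases hy : y = u <;> by_cases hxw : x = w <;>
      by_cases hyw : y = w <;> simp_all <;> tauto

/-- The key computation: local complement at `v`, toggle `uv`, local complement at `v`
turns an isolated vertex `u` into a true twin of `v`. -/
lemma lc_toggle_lc (G : SimpleGraph V) (u v : V) (huv : u ≠ v) (hu : ∀ y, ¬ G.Adj u y) :
    localComp (toggle (localComp G v) u v) v = setNbr G u (insert v (nbrF G v)) := by
  have hu' : ∀ y, ¬ G.Adj y u := fun y hy => hu y hy.symm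
  ext x y
  by_cases hxy : x = y
  · subst hxy
    simp [SimpleGraph.irrefl]
  · simp only [localComp_adj, toggle_adj, setNbr_adj, Xor', Xor, mem_nbrF, Finset.mem_insert]
    by_cases hx : x = u <;> by_cases hy : y = u <;> by_cases hxv : x = v <;>
      by_cases hyv : y = v <;>
      simp_all [SimpleGraph.irrefl] <;>
      by_cases h1 : G.Adj v x <;> by_cases h2 : G.Adj v y <;>
      simp_all [G.adj_comm] <;> tauto

end Proof12Aux2
section Proof12Aux3

open Classical Finset

lemma locallyEquiv_refl (G : SimpleGraph V) : LocallyEquiv G G := Relation.ReflTransGen.refl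

lemma locallyEquiv_trans {G H K : SimpleGraph V} (h1 : LocallyEquiv G H) (h2 : LocallyEquiv H K) :
    LocallyEquiv G K := Relation.ReflTransGen.trans h1 h2

lemma locallyEquiv_single (G : SimpleGraph V) (v : V) : LocallyEquiv G (localComp G v) :=
  Relation.ReflTransGen.single ⟨v, rfl⟩

lemma czle_of_locallyEquiv : ∀ {G G' H : SimpleGraph V} {k},
    LocallyEquiv G G' → CZle G' H k → CZle G H k := by
  intro G G' H k h h2
  induction h2 generalizing G with
  | base h3 => exact CZle.base (locallyEquiv_trans h h3)
  | step u v h1 hne hF hrest ih => exact CZle.step u v (locallyEquiv_trans h h1) hne hF hrest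

lemma czle_trans {G H K : SimpleGraph V} {j l : ℕ} (h1 : CZle G H j) (h2 : CZle H K l) :
    CZle G K (j + l) := by
  induction h1 generalizing K l with
  | base h => simpa using czle_of_locallyEquiv h h2
  | step u v hGG' hne hF hrest ih =>
      have := CZle.step u v hGG' hne hF (ih h2)
      rwa [Nat.add_right_comm]

section
variable [Fintype V] [DecidableEq V]

lemma symmDiff_singleton_of_mem {s : Finset V} {w : V} (hw : w ∈ s) :
    symmDiff s {w} = s.erase w := by
  ext x
  simp only [Finset.mem_symmDiff, Finset.mem_singleton, Finset.mem_erase]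
  constructor
  · rintro (⟨h1, h2⟩ | ⟨rfl, h2⟩)
    · exact ⟨fun h => h2 h, h1⟩
    · exact absurd hw h2
  · rintro ⟨h1, h2⟩; exact Or.inl ⟨h2, h1⟩

lemma czle_setNbr_toggles (G : SimpleGraph V) (u : V) :
    ∀ (n : ℕ) (D D' : Finset V), u ∉ D → u ∉ D' → (symmDiff D D').card = n →
      CZle (setNbr G u D) (setNbr G u D') n := by
  intro n
  induction n with
  | zero =>
      intro D D' _ _ hc
      rw [Finset.card_eq_zero, ← Finset.bot_eq_empty, symmDiff_eq_bot] at hc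
      subst hc
      exact CZle.base (locallyEquiv_refl _)
  | succ n ih =>
      intro D D' hD hD' hc
      have hne : (symmDiff D D').Nonempty := by
        rw [← Finset.card_pos, hc]; omega
      obtain ⟨w, hw⟩ := hne
      have hwu : u ≠ w := by
        rintro rfl
        rcases Finset.mem_symmDiff.1 hw with ⟨h, _⟩ | ⟨h, _⟩ <;> tauto
      have hstep : setNbr G u (symmDiff D {w}) = toggle (setNbr G u D) u w :=
        (toggle_setNbr G u w D (Ne.symm hwu)).symm
      have hrest : CZle (setNbr G u (symmDiff D {w})) (setNbr G u D') n := by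
        apply ih
        · intro hmem
          rcases Finset.mem_symmDiff.1 hmem with ⟨h, _⟩ | ⟨h, _⟩
          · exact hD h
          · exact hwu (Finset.mem_singleton.1 h)
        · exact hD'
        · have : symmDiff (symmDiff D {w}) D' = symmDiff (symmDiff D D') {w} := by
            rw [symmDiff_assoc, symmDiff_comm ({w} : Finset V) D', ← symmDiff_assoc]
          rw [this, symmDiff_singleton_of_mem hw, Finset.card_erase_of_mem hw, hc]
          omega
      exact CZle.step u w (locallyEquiv_refl _) hwu hstep hrest

lemma czle_isolate (K : SimpleGraph V) (u v : V) (huv : u ≠ v) (hu : ∀ y, ¬ K.Adj u y) :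
    CZle (setNbr K u (insert v (nbrF K v))) K 1 := by
  have hid := lc_toggle_lc K u v huv hu
  have h2 : localComp (setNbr K u (insert v (nbrF K v))) v = toggle (localComp K v) u v := by
    rw [← hid, localComp_localComp]
  have h3 : K = localComp (toggle (localComp (setNbr K u (insert v (nbrF K v))) v) u v) v := by
    rw [h2, toggle_toggle, localComp_localComp]
  exact CZle.step u v (locallyEquiv_single _ v) huv rfl
    (CZle.base (Relation.ReflTransGen.single ⟨v, h3⟩))

lemma czle_to_isolated (K : SimpleGraph V) (u v : V) (huv : u ≠ v) (hu : ∀ y, ¬ K.Adj u y)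
    (D : Finset V) (hD : u ∉ D) :
    CZle (setNbr K u D) K ((symmDiff D (insert v (nbrF K v))).card + 1) := by
  have hu2 : u ∉ insert v (nbrF K v) := by
    simp only [Finset.mem_insert, mem_nbrF]
    rintro (rfl | h)
    · exact huv rfl
    · exact hu v h.symm
  exact czle_trans
    (czle_setNbr_toggles K u _ D (insert v (nbrF K v)) hD hu2 rfl)
    (czle_isolate K u v huv hu)
end

end Proof12Aux3
section Proof12Aux4

open Classical Finset

variable [Fintype V] [DecidableEq V] [LinearOrder V]

/-- `x` is the minimum of its part. -/
def isRep (P : Finpartition (Finset.univ : Finset V)) (x : V) : Prop :=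
  ∃ X ∈ P.parts, x ∈ X ∧ ∀ y ∈ X, x ≤ y

def repGraph (G : SimpleGraph V) (P : Finpartition (Finset.univ : Finset V)) :
    SimpleGraph V where
  Adj x y := G.Adj x y ∧ isRep P x ∧ isRep P y
  symm := ⟨fun x y ⟨h1, h2, h3⟩ => ⟨h1.symm, h3, h2⟩⟩
  loopless := ⟨fun x h => G.irrefl h.1⟩

lemma repGraph_adj (G : SimpleGraph V) (P : Finpartition (Finset.univ : Finset V)) (x y : V) :
    (repGraph G P).Adj x y ↔ G.Adj x y ∧ isRep P x ∧ isRep P y := Iff.rfl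

lemma isRep_eq {P : Finpartition (Finset.univ : Finset V)} {x y : V} {X : Finset V}
    (hX : X ∈ P.parts) (hx : x ∈ X) (hy : y ∈ X) (h1 : isRep P x) (h2 : isRep P y) :
    x = y := by
  obtain ⟨X1, hX1, hx1, hm1⟩ := h1
  obtain ⟨X2, hX2, hx2, hm2⟩ := h2
  have e1 : X1 = X := P.eq_of_mem_parts hX1 hX hx1 hx
  have e2 : X2 = X := P.eq_of_mem_parts hX2 hX hx2 hy
  exact le_antisymm (hm1 y (e1 ▸ hy)) (hm2 x (e2 ▸ hx))

lemma repGraph_discrete (G : SimpleGraph V) (P : Finpartition (Finset.univ : Finset V))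
    (h : ∀ X ∈ P.parts, X.card = 1) : repGraph G P = G := by
  have key : ∀ z : V, isRep P z := by
    intro z
    obtain ⟨X, hX, hzX⟩ := P.exists_mem (Finset.mem_univ z)
    obtain ⟨a, ha⟩ := Finset.card_eq_one.1 (h X hX)
    subst ha
    rw [Finset.mem_singleton] at hzX
    subst hzX
    exact ⟨{z}, hX, Finset.mem_singleton_self z, fun y hy => le_of_eq (Finset.mem_singleton.1 hy).symm⟩
  ext x y
  simp only [repGraph_adj]
  tauto

lemma repGraph_trivial (G : SimpleGraph V) (P : Finpartition (Finset.univ : Finset V))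
    (h : P.parts.card ≤ 1) : repGraph G P = ⊥ := by
  ext x y
  simp only [repGraph_adj, SimpleGraph.bot_adj, iff_false]
  rintro ⟨hadj, ⟨X, hX, hxX, hxm⟩, ⟨Y, hY, hyY, hym⟩⟩
  have hXY : X = Y := Finset.card_le_one.1 h X hX Y hY
  subst hXY
  exact G.ne_of_adj hadj (le_antisymm (hxm y hyY) (hym x hxX))

noncomputable def partOf (P : Finpartition (Finset.univ : Finset V)) (x : V) : Finset V :=
  (P.exists_mem (Finset.mem_univ x)).choose

lemma partOf_mem (P : Finpartition (Finset.univ : Finset V)) (x : V) :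
    partOf P x ∈ P.parts := (P.exists_mem (Finset.mem_univ x)).choose_spec.1

lemma mem_partOf (P : Finpartition (Finset.univ : Finset V)) (x : V) :
    x ∈ partOf P x := (P.exists_mem (Finset.mem_univ x)).choose_spec.2

lemma erase_comm' {α : Type*} [DecidableEq α] (s : Finset α) (a b : α) :
    (s.erase a).erase b = (s.erase b).erase a := by
  ext x; simp only [Finset.mem_erase]; tauto

end Proof12Aux4
section Proof12Aux5

open Classical Finset

variable [Fintype V] [DecidableEq V] [LinearOrder V]

lemma czle_mergeStep_aux (G : SimpleGraph V) {P Q : Finpartition (Finset.univ : Finset V)}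
    {k : ℕ} {A B : Finset V} (hA : A ∈ P.parts) (hB : B ∈ P.parts) (hAB : A ≠ B)
    (hQ : Q.parts = insert (A ∪ B) ((P.parts.erase A).erase B))
    {v : V} (hvA : v ∈ A) (hvmin : ∀ y ∈ A ∪ B, v ≤ y)
    (hred : RedDegLE G Q k) :
    ∃ c ≤ k + 2, CZle (repGraph G P) (repGraph G Q) c := by
  have hBne : B.Nonempty := P.nonempty_of_mem_parts hB
  set u := B.min' hBne with hu_def
  have hu_mem : u ∈ B := Finset.min'_mem B hBne
  have hu_minB : ∀ y ∈ B, u ≤ y := fun y hy => Finset.min'_le B y hy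
  have huv : u ≠ v := by
    rintro rfl
    exact hAB (P.eq_of_mem_parts hA hB hvA hu_mem)
  have hABQ : A ∪ B ∈ Q.parts := by rw [hQ]; exact Finset.mem_insert_self _ _
  -- representative facts
  have h1 : isRep Q v := ⟨A ∪ B, hABQ, Finset.mem_union_left _ hvA, hvmin⟩
  have h2 : isRep P v := ⟨A, hA, hvA, fun y hy => hvmin y (Finset.mem_union_left _ hy)⟩
  have h3 : isRep P u := ⟨B, hB, hu_mem, hu_minB⟩
  have h4 : ¬ isRep Q u := by
    rintro ⟨X, hX, huX, hmin⟩
    rw [hQ] at hX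
    rcases Finset.mem_insert.1 hX with rfl | hX'
    · exact huv (le_antisymm (hmin v (Finset.mem_union_left _ hvA))
        (hvmin u (Finset.mem_union_right _ hu_mem)))
    · have hXP : X ∈ P.parts := Finset.mem_of_mem_erase (Finset.mem_of_mem_erase hX')
      exact Finset.ne_of_mem_erase hX' (P.eq_of_mem_parts hXP hB huX hu_mem)
  have h5 : ∀ x, x ≠ u → (isRep P x ↔ isRep Q x) := by
    intro x hxu
    constructor
    · rintro ⟨X, hX, hxX, hmin⟩
      by_cases hXA : X = A
      · subst hXA
        have hxv : x = v := le_antisymm (hmin v hvA) (hvmin x (Finset.mem_union_left _ hxX))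
        subst hxv; exact h1
      · by_cases hXB : X = B
        · subst hXB
          exact absurd (le_antisymm (hmin u hu_mem) (hu_minB x hxX)) hxu
        · refine ⟨X, ?_, hxX, hmin⟩
          rw [hQ]
          exact Finset.mem_insert_of_mem
            (Finset.mem_erase.2 ⟨hXB, Finset.mem_erase.2 ⟨hXA, hX⟩⟩)
    · rintro ⟨X, hX, hxX, hmin⟩
      rw [hQ] at hX
      rcases Finset.mem_insert.1 hX with rfl | hX'
      · have hxv : x = v := le_antisymm (hmin v (Finset.mem_union_left _ hvA)) (hvmin x hxX)
        subst hxv; exact h2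
      · exact ⟨X, Finset.mem_of_mem_erase (Finset.mem_of_mem_erase hX'), hxX, hmin⟩
  set K := repGraph G Q with hK_def
  have hKu : ∀ y, ¬ K.Adj u y := fun y hy => h4 hy.2.1
  set D : Finset V := nbrF (repGraph G P) u with hD_def
  have hDu : u ∉ D := by rw [hD_def, mem_nbrF]; exact (repGraph G P).irrefl
  set D₀ : Finset V := insert v (nbrF K v) with hD0_def
  have hD0u : u ∉ D₀ := by
    rw [hD0_def]
    simp only [Finset.mem_insert, mem_nbrF]
    rintro (rfl | hadj)
    · exact huv rfl
    · exact hKu v hadj.symm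
  -- repGraph G P is K with the neighbourhood of u set to D
  have hPK : repGraph G P = setNbr K u D := by
    ext x y
    by_cases hx : x = u
    · subst hx
      by_cases hy : y = u
      · subst hy
        simp [setNbr_adj, SimpleGraph.irrefl]
      · simp only [setNbr_adj, hD_def, mem_nbrF]
        constructor
        · intro h; exact Or.inr (Or.inl ⟨trivial, h, hy⟩)
        · rintro (⟨h, _⟩ | ⟨_, h, _⟩ | ⟨h, _, habs⟩)
          · exact absurd rfl h
          · exact h
          · subst h; exact absurd rfl habs
    · by_cases hy : y = u
      · subst hy
        simp only [setNbr_adj, hD_def, mem_nbrF]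
        constructor
        · intro h; exact Or.inr (Or.inr ⟨trivial, (repGraph G P).adj_symm h, hx⟩)
        · rintro (⟨_, h, _⟩ | ⟨habs, _, _⟩ | ⟨_, h, _⟩)
          · exact absurd rfl h
          · exact absurd habs hx
          · exact (repGraph G P).adj_symm h
      · simp only [setNbr_adj, repGraph_adj, hK_def]
        constructor
        · rintro ⟨ha, hrx, hry⟩
          exact Or.inl ⟨hx, hy, ha, (h5 x hx).1 hrx, (h5 y hy).1 hry⟩
        · rintro (⟨_, _, ha, hrx, hry⟩ | ⟨habs, _⟩ | ⟨habs, _⟩)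
          · exact ⟨ha, (h5 x hx).2 hrx, (h5 y hy).2 hry⟩
          · exact absurd habs hx
          · exact absurd habs hy
  -- the CZ sequence
  refine ⟨(symmDiff D D₀).card + 1, ?_, ?_⟩
  swap
  · rw [hPK]
    exact czle_to_isolated K u v huv hKu D hDu
  -- the bound
  have hrepΔ : ∀ y ∈ (symmDiff D D₀).erase v, isRep Q y ∧ isRep P y := by
    intro y hy
    have hyv : y ≠ v := Finset.ne_of_mem_erase hy
    have hyΔ := Finset.mem_of_mem_erase hy
    have hyu : y ≠ u := by
      rintro rfl
      rcases Finset.mem_symmDiff.1 hyΔ with ⟨h, _⟩ | ⟨h, _⟩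
      · exact hDu h
      · exact hD0u h
    rcases Finset.mem_symmDiff.1 hyΔ with ⟨h, _⟩ | ⟨h, _⟩
    · rw [hD_def, mem_nbrF] at h
      exact ⟨(h5 y hyu).1 h.2.2, h.2.2⟩
    · rw [hD0_def, Finset.mem_insert, mem_nbrF] at h
      rcases h with rfl | h
      · exact absurd rfl hyv
      · exact ⟨h.2.2, (h5 y hyu).2 h.2.2⟩
  have hadjΔ : ∀ y ∈ (symmDiff D D₀).erase v,
      (G.Adj u y ∧ ¬ G.Adj v y) ∨ (G.Adj v y ∧ ¬ G.Adj u y) := by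
    intro y hy
    have hyv : y ≠ v := Finset.ne_of_mem_erase hy
    have hyΔ := Finset.mem_of_mem_erase hy
    obtain ⟨hrQ, hrP⟩ := hrepΔ y hy
    have hmemD : y ∈ D ↔ G.Adj u y := by
      rw [hD_def, mem_nbrF, repGraph_adj]
      exact ⟨fun h => h.1, fun h => ⟨h, h3, hrP⟩⟩
    have hmemD0 : y ∈ D₀ ↔ G.Adj v y := by
      rw [hD0_def, Finset.mem_insert, mem_nbrF, hK_def, repGraph_adj]
      constructor
      · rintro (rfl | h)
        · exact absurd rfl hyv
        · exact h.1
      · intro h; exact Or.inr ⟨h, h1, hrQ⟩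
    rcases Finset.mem_symmDiff.1 hyΔ with ⟨ha, hb⟩ | ⟨ha, hb⟩
    · exact Or.inl ⟨hmemD.1 ha, fun hc => hb (hmemD0.2 hc)⟩
    · exact Or.inr ⟨hmemD0.1 ha, fun hc => hb (hmemD.2 hc)⟩
  -- the bad parts
  have hfin : {Y : Finset V | Y ∈ Q.parts ∧ Y ≠ A ∪ B ∧ ¬ Homog G (A ∪ B) Y}.Finite :=
    Q.parts.finite_toSet.subset (fun Y hY => hY.1)
  have hcardBad : hfin.toFinset.card ≤ k := by
    rw [← Set.ncard_eq_toFinset_card _ hfin]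
    exact hred (A ∪ B) hABQ
  have hmap : ∀ y ∈ (symmDiff D D₀).erase v, partOf Q y ∈ hfin.toFinset := by
    intro y hy
    have hyv : y ≠ v := Finset.ne_of_mem_erase hy
    obtain ⟨hrQ, hrP⟩ := hrepΔ y hy
    rw [Set.Finite.mem_toFinset]
    refine ⟨partOf_mem Q y, ?_, ?_⟩
    · -- partOf Q y ≠ A ∪ B
      rintro hEq
      obtain ⟨X, hX, hyX, hmin⟩ := hrQ
      have hXpart : X = partOf Q y := Q.eq_of_mem_parts hX (partOf_mem Q y) hyX (mem_partOf Q y)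
      rw [hXpart, hEq] at hmin hyX
      exact hyv (le_antisymm (hmin v (Finset.mem_union_left _ hvA)) (hvmin y hyX))
    · -- not homogeneous
      intro hhom
      have hyY : y ∈ partOf Q y := mem_partOf Q y
      have huAB : u ∈ A ∪ B := Finset.mem_union_right _ hu_mem
      have hvAB : v ∈ A ∪ B := Finset.mem_union_left _ hvA
      rcases hadjΔ y hy with ⟨ha, hb⟩ | ⟨ha, hb⟩ <;>
        rcases hhom with hall | hnone
      · exact hb (hall v hvAB y hyY)
      · exact hnone u huAB y hyY ha
      · exact hb (hall u huAB y hyY)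
      · exact hnone v hvAB y hyY ha
  have hinj : Set.InjOn (partOf Q) ↑((symmDiff D D₀).erase v) := by
    intro y1 hy1 y2 hy2 heq
    have hr1 := (hrepΔ y1 hy1).1
    have hr2 := (hrepΔ y2 hy2).1
    exact isRep_eq (partOf_mem Q y1) (mem_partOf Q y1) (heq ▸ mem_partOf Q y2) hr1 hr2
  have hcard1 : ((symmDiff D D₀).erase v).card ≤ k :=
    le_trans (Finset.card_le_card_of_injOn (partOf Q) hmap hinj) hcardBad
  have hcard2 : (symmDiff D D₀).card ≤ k + 1 := by
    have hsub : symmDiff D D₀ ⊆ insert v ((symmDiff D D₀).erase v) :=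
      Finset.subset_insert_iff.2 (Finset.Subset.refl _)
    calc (symmDiff D D₀).card ≤ (insert v ((symmDiff D D₀).erase v)).card :=
          Finset.card_le_card hsub
      _ ≤ ((symmDiff D D₀).erase v).card + 1 := Finset.card_insert_le _ _
      _ ≤ k + 1 := by omega
  omega

end Proof12Aux5
section Proof12Aux6

open Classical Finset

variable [Fintype V] [DecidableEq V] [LinearOrder V]

lemma czle_mergeStep (G : SimpleGraph V) {P Q : Finpartition (Finset.univ : Finset V)}
    {k : ℕ} (hm : MergeStep P Q) (hred : RedDegLE G Q k) :
    ∃ c ≤ k + 2, CZle (repGraph G P) (repGraph G Q) c := by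
  obtain ⟨A, B, hA, hB, hAB, hQ⟩ := hm
  obtain ⟨a, ha⟩ := P.nonempty_of_mem_parts hA
  have hne : (A ∪ B).Nonempty := ⟨a, Finset.mem_union_left _ ha⟩
  set v := (A ∪ B).min' hne with hv_def
  have hvmin : ∀ y ∈ A ∪ B, v ≤ y := fun y hy => Finset.min'_le _ y hy
  rcases Finset.mem_union.1 ((A ∪ B).min'_mem hne) with hvA | hvB
  · exact czle_mergeStep_aux G hA hB hAB hQ hvA hvmin hred
  · have hQ' : Q.parts = insert (B ∪ A) ((P.parts.erase B).erase A) := by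
      rw [hQ, Finset.union_comm, erase_comm']
    have hvmin' : ∀ y ∈ B ∪ A, v ≤ y := by
      intro y hy
      exact hvmin y (by rwa [Finset.union_comm])
    exact czle_mergeStep_aux G hB hA (Ne.symm hAB) hQ' hvB hvmin' hred

lemma czle_chain (G : SimpleGraph V) {k m : ℕ}
    (seq : Fin (m + 1) → Finpartition (Finset.univ : Finset V))
    (hmerge : ∀ i : Fin m, MergeStep (seq i.castSucc) (seq i.succ))
    (hred : ∀ i, RedDegLE G (seq i) k) :
    ∀ i : Fin (m + 1), ∃ c ≤ (k + 2) * i.val,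
      CZle (repGraph G (seq 0)) (repGraph G (seq i)) c := by
  intro i
  induction i using Fin.induction with
  | zero => exact ⟨0, Nat.zero_le _, CZle.base (locallyEquiv_refl _)⟩
  | succ i ih =>
      obtain ⟨c, hc, hcz⟩ := ih
      obtain ⟨c', hc', hcz'⟩ := czle_mergeStep G (hmerge i) (hred i.succ)
      refine ⟨c + c', ?_, czle_trans hcz hcz'⟩
      rw [Fin.val_succ, Nat.mul_succ]
      rw [Fin.coe_castSucc] at hc
      omega

lemma parts_card_eq (G : SimpleGraph V) {m : ℕ}
    (seq : Fin (m + 1) → Finpartition (Finset.univ : Finset V))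
    (h0 : ∀ X ∈ (seq 0).parts, X.card = 1)
    (hmerge : ∀ i : Fin m, MergeStep (seq i.castSucc) (seq i.succ)) :
    ∀ i : Fin (m + 1), (seq i).parts.card + i.val = Fintype.card V := by
  intro i
  induction i using Fin.induction with
  | zero =>
      have h1 := (seq 0).sum_card_parts
      rw [Finset.sum_congr rfl h0, Finset.sum_const, smul_eq_mul, mul_one] at h1
      simp only [Fin.val_zero, Nat.add_zero]
      rw [h1, Finset.card_univ]
  | succ i ih =>
      obtain ⟨A, B, hA, hB, hAB, hQ⟩ := hmerge i
      have hBA : B ∈ (seq i.castSucc).parts.erase A := Finset.mem_erase.2 ⟨Ne.symm hAB, hB⟩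
      have hnotin : A ∪ B ∉ ((seq i.castSucc).parts.erase A).erase B := by
        intro hmem
        have hP : A ∪ B ∈ (seq i.castSucc).parts :=
          Finset.mem_of_mem_erase (Finset.mem_of_mem_erase hmem)
        obtain ⟨a, ha⟩ := (seq i.castSucc).nonempty_of_mem_parts hA
        have hAeq : A = A ∪ B :=
          (seq i.castSucc).eq_of_mem_parts hA hP ha (Finset.mem_union_left _ ha)
        obtain ⟨b, hb⟩ := (seq i.castSucc).nonempty_of_mem_parts hB
        have hbA : b ∈ A := by rw [hAeq]; exact Finset.mem_union_right _ hb
        exact hAB ((seq i.castSucc).eq_of_mem_parts hA hB hbA hb)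
      have hge : 2 ≤ (seq i.castSucc).parts.card :=
        Finset.one_lt_card.2 ⟨A, hA, B, hB, hAB⟩
      have hcard : (seq i.succ).parts.card = (seq i.castSucc).parts.card - 1 := by
        rw [hQ, Finset.card_insert_of_notMem hnotin, Finset.card_erase_of_mem hBA,
          Finset.card_erase_of_mem hA]
        omega
      rw [Fin.coe_castSucc] at ih
      rw [Fin.val_succ]
      omega

end Proof12Aux6
theorem stmt12 [Fintype V] [DecidableEq V] (G : SimpleGraph V) (n k : ℕ)
    (hn : Fintype.card V = n) (h : TwinWidthLE G k) : cz G ≤ (k + 2) * n := by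
  classical
  letI : LinearOrder V := LinearOrder.lift' (Fintype.equivFin V) (Fintype.equivFin V).injective
  obtain ⟨m, seq, h0, hlast, hmerge, hred⟩ := h
  have hG : repGraph G (seq 0) = G := repGraph_discrete G (seq 0) h0
  have hbot : repGraph G (seq (Fin.last m)) = ⊥ := repGraph_trivial G _ hlast
  obtain ⟨c, hc, hcz⟩ := czle_chain G seq hmerge hred (Fin.last m)
  rw [hG, hbot] at hcz
  have hm_le : m ≤ n := by
    have h1 := parts_card_eq G seq h0 hmerge (Fin.last m)
    rw [Fin.val_last, hn] at h1
    omega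
  have h2 : cz G ≤ c := Nat.sInf_le hcz
  rw [Fin.val_last] at hc
  calc cz G ≤ c := h2
    _ ≤ (k + 2) * m := hc
    _ ≤ (k + 2) * n := Nat.mul_le_mul_left _ hm_le
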